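/- Let H be a finite abelian group, α : H → ℂ* a homomorphism with m = |H|/|Ker α|, and k ≥ 1 an integer. Then ∏_{g ∈ H} (1 − α(g)^{-k} t^k) = (1 − t^{lcm(k,m)})^{k|H|/lcm(k,m)} as polynomials in ℂ[t]. In particular k|H| is divisible by lcm(k, m). -/

import Mathlib

open Polynomial Finset

lemma roots_prod_aux (n : ℕ) (hn : 0 < n) (x : ℂ) :
    ∏ z ∈ nthRootsFinset n (1 : ℂ), (1 - z * x) = 1 - x ^ n := by
  have hprim := Complex.isPrimitiveRoot_exp n hn.ne'
  have key := X_pow_sub_one_eq_prod hn hprim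
  have hx : x ^ n - 1 = ∏ z ∈ nthRootsFinset n (1 : ℂ), (x - z) := by
    have := congrArg (Polynomial.eval x) key
    simpa [eval_prod] using this
  have h0 : (-1 : ℂ) = ∏ z ∈ nthRootsFinset n (1 : ℂ), (-z) := by
    have := congrArg (Polynomial.eval 0) key
    simpa [eval_prod, zero_pow hn.ne'] using this
  have hz0 : ∀ z ∈ nthRootsFinset n (1 : ℂ), z ≠ 0 := by
    intro z hz
    have := (mem_nthRootsFinset hn (1 : ℂ)).mp hz
    intro h; rw [h, zero_pow hn.ne'] at this; exact zero_ne_one this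
  have hinv : ∏ z ∈ nthRootsFinset n (1 : ℂ), (x - z⁻¹) = ∏ z ∈ nthRootsFinset n (1 : ℂ), (x - z) := by
    refine Finset.prod_bij' (fun z _ => z⁻¹) (fun z _ => z⁻¹) ?_ ?_ ?_ ?_ ?_
    · intro z hz
      rw [mem_nthRootsFinset hn] at hz ⊢
      simp [inv_pow, hz]
    · intro z hz
      rw [mem_nthRootsFinset hn] at hz ⊢
      simp [inv_pow, hz]
    · intro z hz; simp
    · intro z hz; simp
    · intro z hz; simp
  calc ∏ z ∈ nthRootsFinset n (1 : ℂ), (1 - z * x)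
      = ∏ z ∈ nthRootsFinset n (1 : ℂ), ((-z) * (x - z⁻¹)) := by
        refine Finset.prod_congr rfl fun z hz => ?_
        field_simp [hz0 z hz]; ring
    _ = (∏ z ∈ nthRootsFinset n (1 : ℂ), (-z)) * ∏ z ∈ nthRootsFinset n (1 : ℂ), (x - z⁻¹) := by
        rw [Finset.prod_mul_distrib]
    _ = (-1) * (x ^ n - 1) := by rw [← h0, hinv, ← hx]
    _ = 1 - x ^ n := by ring

lemma fiber_card_aux {H : Type*} [CommGroup H] [Fintype H] [DecidableEq ℂ]
    (β : H →* ℂˣ) (g₀ : H) :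
    #{g : H | ((β g : ℂˣ) : ℂ) = ((β g₀ : ℂˣ) : ℂ)} = Nat.card β.ker := by
  classical
  have : Nat.card β.ker = #{g : H | g ∈ β.ker} := by
    rw [Nat.card_eq_fintype_card, Fintype.card_subtype]
  rw [this]
  refine Finset.card_bij' (fun g _ => g₀⁻¹ * g) (fun h _ => g₀ * h) ?_ ?_ ?_ ?_
  · intro g hg
    simp only [Finset.mem_filter, Finset.mem_univ, true_and] at hg ⊢
    have : β g = β g₀ := Units.ext hg
    simp [MonoidHom.mem_ker, this]
  · intro h hh
    simp only [Finset.mem_filter, Finset.mem_univ, true_and] at hh ⊢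
    rw [MonoidHom.mem_ker] at hh
    simp [hh]
  · intro g _; group
  · intro h _; group

theorem prod_char_values_eq_pow (H : Type*) [CommGroup H] [Fintype H] (α : H →* ℂˣ)
    (m : ℕ) (hm : m = Nat.card H / Nat.card α.ker) (k : ℕ) (hk : 1 ≤ k) :
    (∀ t : ℂ,
      ∏ g : H, (1 - (((α g)⁻¹ : ℂˣ) : ℂ) ^ k * t ^ k) =
        (1 - t ^ Nat.lcm k m) ^ (k * Nat.card H / Nat.lcm k m)) ∧
    Nat.lcm k m ∣ k * Nat.card H := by
  classical
  have hk0 : k ≠ 0 := by omega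
  have hker_pos : 0 < Nat.card α.ker := Nat.card_pos
  have hcard : Nat.card H = Nat.card α.range * Nat.card α.ker := by
    rw [Subgroup.card_eq_card_quotient_mul_card_subgroup α.ker,
      Nat.card_congr (QuotientGroup.quotientKerEquivRange α).toEquiv]
  have hm' : m = Nat.card α.range := by
    rw [hm, hcard, Nat.mul_div_cancel _ hker_pos]
  have hm_pos : 0 < m := by rw [hm']; exact Nat.card_pos
  obtain ⟨ζ, hζ⟩ := IsCyclic.exists_generator (α := α.range)
  have hζord : orderOf ζ = m := by
    rw [orderOf_eq_card_of_forall_mem_zpowers hζ]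
    exact hm'.symm
  set ζ₀ : ℂˣ := (ζ : ℂˣ) with hζ₀def
  have hζ₀ord : orderOf ζ₀ = m := by rw [hζ₀def, Subgroup.orderOf_coe, hζord]
  set u : ℂˣ := (ζ₀⁻¹) ^ k with hu
  set β : H →* ℂˣ := α⁻¹ ^ k with hβdef
  have hβ : ∀ g : H, β g = ((α g)⁻¹) ^ k := fun g => rfl
  set n := orderOf u with hndef
  have hnval : n = m / Nat.gcd m k := by
    rw [hndef, hu, orderOf_pow' _ hk0, orderOf_inv, hζ₀ord]
  have hn_pos : 0 < n := by
    rw [hnval]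
    exact Nat.div_pos (Nat.le_of_dvd hm_pos (Nat.gcd_dvd_left m k))
      (Nat.gcd_pos_of_pos_left k hm_pos)
  have hkn : k * n = Nat.lcm k m := by
    have hlcm : Nat.lcm k m = k * m / Nat.gcd k m := rfl
    rw [hnval, Nat.gcd_comm m k, ← Nat.mul_div_assoc k (Nat.gcd_dvd_right k m), hlcm]
  have hrange : β.range = Subgroup.zpowers u := by
    ext x
    constructor
    · rintro ⟨g, rfl⟩
      obtain ⟨j, hj⟩ := hζ ⟨α g, ⟨g, rfl⟩⟩
      have hj' : ζ₀ ^ j = α g := by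
        have := congrArg (Subtype.val) hj
        simpa using this
      refine ⟨j, ?_⟩
      rw [hβ g, ← hj', hu]
      group
    · rintro ⟨j, rfl⟩
      obtain ⟨g₀, hg₀⟩ := ζ.2
      refine ⟨g₀ ^ j, ?_⟩
      rw [hβ, map_zpow, hg₀, hu]
      group
      rfl
  have hcardn : Nat.card β.range = n := by rw [hrange, Nat.card_zpowers]
  have hcardβ : Nat.card H = n * Nat.card β.ker := by
    rw [Subgroup.card_eq_card_quotient_mul_card_subgroup β.ker,
      Nat.card_congr (QuotientGroup.quotientKerEquivRange β).toEquiv, hcardn]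
  have hdvd : Nat.lcm k m ∣ k * Nat.card H := by
    rw [← hkn, hcardβ]
    exact ⟨Nat.card β.ker, by ring⟩
  have hc : k * Nat.card H / Nat.lcm k m = Nat.card β.ker := by
    rw [← hkn, hcardβ, ← mul_assoc]
    exact Nat.mul_div_cancel_left _ (by positivity)
  refine ⟨fun t => ?_, hdvd⟩
  -- rewrite the product in terms of β
  have hstep : ∀ g : H, (1 - (((α g)⁻¹ : ℂˣ) : ℂ) ^ k * t ^ k)
      = (fun z : ℂ => 1 - z * t ^ k) (((β g : ℂˣ) : ℂ)) := by
    intro g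
    simp [hβ g]
  rw [Finset.prod_congr rfl (fun g _ => hstep g),
    Finset.prod_comp (fun z : ℂ => 1 - z * t ^ k) (fun g : H => ((β g : ℂˣ) : ℂ))]
  have himgcard : (Finset.univ.image (fun g : H => ((β g : ℂˣ) : ℂ))).card = n := by
    have h1 : Finset.univ.image (fun g : H => ((β g : ℂˣ) : ℂ))
        = (Finset.univ.image β).image Units.val := by
      rw [Finset.image_image]; rfl
    rw [h1, Finset.card_image_of_injective _ Units.val_injective]
    rw [← hcardn, Nat.card_eq_fintype_card]
    rw [← Set.toFinset_range, Set.toFinset_card]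
    exact Fintype.card_congr (Equiv.setCongr (β.coe_range).symm)
  have himg : Finset.univ.image (fun g : H => ((β g : ℂˣ) : ℂ))
      = Polynomial.nthRootsFinset n (1 : ℂ) := by
    apply Finset.eq_of_subset_of_card_le
    · intro z hz
      obtain ⟨g, -, rfl⟩ := Finset.mem_image.mp hz
      rw [mem_nthRootsFinset hn_pos]
      have hmem : β g ∈ Subgroup.zpowers u := hrange ▸ ⟨g, rfl⟩
      have : orderOf (β g) ∣ n := by
        have := Subgroup.orderOf_dvd_natCard (Subgroup.zpowers u) hmem
        rwa [Nat.card_zpowers] at this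
      have hpow : (β g) ^ n = 1 := orderOf_dvd_iff_pow_eq_one.mp this
      rw [← Units.val_pow_eq_pow_val, hpow, Units.val_one]
    · rw [himgcard, (Complex.isPrimitiveRoot_exp n hn_pos.ne').card_nthRootsFinset]
  rw [himg]
  have hfib : ∀ z ∈ Polynomial.nthRootsFinset n (1 : ℂ),
      ((fun z : ℂ => 1 - z * t ^ k) z) ^ #{g : H | ((β g : ℂˣ) : ℂ) = z}
        = ((fun z : ℂ => 1 - z * t ^ k) z) ^ (Nat.card β.ker) := by
    intro z hz
    rw [← himg] at hz
    obtain ⟨g₀, -, rfl⟩ := Finset.mem_image.mp hz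
    rw [fiber_card_aux β g₀]
  rw [Finset.prod_congr rfl hfib, Finset.prod_pow]
  rw [roots_prod_aux n hn_pos (t ^ k), ← pow_mul, hkn, hc]
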